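/- Let A be a real antisymmetric n × n matrix and V = V₁ + iV₂ a complex symmetric n × n matrix such that V₁ = Re V is positive semidefinite and V is invertible. Then for every real λ the matrix T(λ) = λ²I + 2λA + (1/2)V is invertible. Consequently, the 2n × 2n matrix F = [[−A, I], [A² − V/2, −A]] has no real eigenvalues; in particular F is bijective. -/

import Mathlib

open Matrix

private lemma conj_quadform {n : ℕ} (M : Matrix (Fin n) (Fin n) ℂ) (v : Fin n → ℂ) :
    (starRingEnd ℂ) (star v ⬝ᵥ M.mulVec v) = star v ⬝ᵥ Mᴴ.mulVec v := by
  simp only [dotProduct, mulVec, Pi.star_apply, Finset.mul_sum, map_sum, _root_.map_mul,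
    Complex.conj_conj, conjTranspose_apply, RingHom.id_apply]
  rw [Finset.sum_comm]
  refine Finset.sum_congr rfl fun i _ => Finset.sum_congr rfl fun j _ => ?_
  simp [RCLike.star_def]
  ring

private lemma re_quadform_nonneg {n : ℕ} {M : Matrix (Fin n) (Fin n) ℝ} (hM : M.PosSemidef)
    (v : Fin n → ℂ) : 0 ≤ (star v ⬝ᵥ (M.map Complex.ofReal).mulVec v).re := by
  set a : Fin n → ℝ := fun i => (v i).re with ha
  set b : Fin n → ℝ := fun i => (v i).im with hb
  have key : (star v ⬝ᵥ (M.map Complex.ofReal).mulVec v).re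
      = a ⬝ᵥ M.mulVec a + b ⬝ᵥ M.mulVec b := by
    simp only [dotProduct, mulVec, Pi.star_apply, Matrix.map_apply, Finset.mul_sum,
      Complex.re_sum, ← Finset.sum_add_distrib]
    refine Finset.sum_congr rfl fun i _ => Finset.sum_congr rfl fun j _ => ?_
    simp only [RCLike.star_def, Complex.mul_re, Complex.mul_im, Complex.conj_re,
      Complex.conj_im, Complex.ofReal_re, Complex.ofReal_im, ha, hb]
    ring
  rw [key]
  have h1 := hM.dotProduct_mulVec_nonneg a
  have h2 := hM.dotProduct_mulVec_nonneg b
  simp only [star_trivial] at h1 h2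
  exact add_nonneg h1 h2

theorem hamilton_matrix_no_real_eigenvalues
    (n : ℕ) (A : Matrix (Fin n) (Fin n) ℝ) (hA : Aᵀ = -A)
    (V : Matrix (Fin n) (Fin n) ℂ) (hV : Vᵀ = V)
    (hpsd : (V.map Complex.re).PosSemidef) (hVinv : IsUnit V)
    (Ac : Matrix (Fin n) (Fin n) ℂ) (hAc : Ac = A.map Complex.ofReal)
    (F : Matrix (Fin n ⊕ Fin n) (Fin n ⊕ Fin n) ℂ)
    (hF : F = Matrix.fromBlocks (-Ac) 1 (Ac * Ac - (1/2 : ℂ) • V) (-Ac))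
    (T : ℂ → Matrix (Fin n) (Fin n) ℂ)
    (hT : ∀ lam : ℂ, T lam = lam ^ 2 • 1 + (2 * lam) • Ac + (1/2 : ℂ) • V) :
    (∀ lam : ℝ, IsUnit (T (lam : ℂ))) ∧
    (∀ lam : ℝ,
      ((lam : ℂ) • (1 : Matrix (Fin n ⊕ Fin n) (Fin n ⊕ Fin n) ℂ) - F).det ≠ 0) ∧
    IsUnit F := by
  -- conjugate transposes of the relevant matrices
  have hAcH : Acᴴ = -Ac := by
    rw [hAc]
    ext i j
    have := congrFun (congrFun hA i) j
    simp only [transpose_apply, neg_apply] at this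
    simp [conjTranspose_apply, Matrix.map_apply, this]
  -- key step : T lam is a unit for every real lam
  have hTunit : ∀ lam : ℝ, IsUnit (T (lam : ℂ)) := by
    intro lam
    rw [Matrix.isUnit_iff_isUnit_det, isUnit_iff_ne_zero]
    by_cases hlam : lam = 0
    · subst hlam
      have : T ((0 : ℝ) : ℂ) = (1/2 : ℂ) • V := by
        rw [hT]; push_cast; simp
      rw [this, Matrix.det_smul]
      have hVdet : V.det ≠ 0 := ((Matrix.isUnit_iff_isUnit_det V).mp hVinv).ne_zero
      exact mul_ne_zero (pow_ne_zero _ (by norm_num)) hVdet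
    · intro hdet
      obtain ⟨v, hv0, hv⟩ := (Matrix.exists_mulVec_eq_zero_iff).mpr hdet
      have hs : star v ⬝ᵥ (T (lam : ℂ)).mulVec v = 0 := by rw [hv, dotProduct_zero]
      rw [hT] at hs
      set d : ℂ := star v ⬝ᵥ v with hd
      set sA : ℂ := star v ⬝ᵥ Ac.mulVec v with hsA
      set sV : ℂ := star v ⬝ᵥ V.mulVec v with hsV
      have hexp : ((lam : ℂ) ^ 2) * d + (2 * (lam : ℂ)) * sA + (1/2 : ℂ) * sV = 0 := by
        rw [← hs]
        simp [add_mulVec, smul_mulVec, dotProduct_add, dotProduct_smul,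
          smul_eq_mul, hd, hsA, hsV, one_mulVec]
      -- real part of sA vanishes
      have hsAre : sA.re = 0 := by
        have h1 : (starRingEnd ℂ) sA = -sA := by
          rw [hsA, conj_quadform, hAcH]
          simp [neg_mulVec, dotProduct_neg]
        have := congrArg Complex.re h1
        simp only [Complex.conj_re, Complex.neg_re] at this
        linarith
      -- real part of sV is nonnegative
      have hsVre : 0 ≤ sV.re := by
        set V1 : Matrix (Fin n) (Fin n) ℂ := (V.map Complex.re).map Complex.ofReal with hV1
        set V2 : Matrix (Fin n) (Fin n) ℂ := (V.map Complex.im).map Complex.ofReal with hV2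
        have hsplit : V = V1 + Complex.I • V2 := by
          ext i j
          simp only [Matrix.add_apply, Matrix.smul_apply, hV1, hV2, Matrix.map_apply, smul_eq_mul]
          rw [mul_comm, Complex.re_add_im]
        have hV2H : V2ᴴ = V2 := by
          ext i j
          have := congrFun (congrFun hV j) i
          simp only [transpose_apply] at this
          simp [hV2, conjTranspose_apply, Matrix.map_apply, ← this]
        have hsVsplit : sV = (star v ⬝ᵥ V1.mulVec v) + Complex.I * (star v ⬝ᵥ V2.mulVec v) := by
          rw [hsV, hsplit]
          simp [add_mulVec, smul_mulVec, dotProduct_add, dotProduct_smul, smul_eq_mul]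
        have hs2 : (star v ⬝ᵥ V2.mulVec v).im = 0 := by
          have h1 : (starRingEnd ℂ) (star v ⬝ᵥ V2.mulVec v) = star v ⬝ᵥ V2.mulVec v := by
            rw [conj_quadform, hV2H]
          exact Complex.conj_eq_iff_im.mp h1
        have hs1 : 0 ≤ (star v ⬝ᵥ V1.mulVec v).re := re_quadform_nonneg hpsd v
        rw [hsVsplit]
        simp only [Complex.add_re, Complex.mul_re, Complex.I_re, Complex.I_im, hs2]
        linarith
      -- positivity of d.re
      have hdre : 0 < d.re := by
        have hform : d.re = ∑ i, Complex.normSq (v i) := by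
          rw [hd]
          simp only [dotProduct, Pi.star_apply, Complex.re_sum, RCLike.star_def]
          refine Finset.sum_congr rfl fun i _ => ?_
          simp [Complex.normSq_apply, Complex.mul_re]
        rw [hform]
        obtain ⟨i, hi⟩ := Function.ne_iff.mp hv0
        refine Finset.sum_pos' (fun j _ => Complex.normSq_nonneg _) ⟨i, Finset.mem_univ i, ?_⟩
        simpa [Complex.normSq_pos] using hi
      -- take real parts in hexp
      have hre := congrArg Complex.re hexp
      have hcast : ((lam : ℂ) ^ 2) = ((lam ^ 2 : ℝ) : ℂ) := by push_cast; ring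
      have hcast2 : (2 * (lam : ℂ)) = ((2 * lam : ℝ) : ℂ) := by push_cast; ring
      have hcast3 : (1/2 : ℂ) = ((1/2 : ℝ) : ℂ) := by norm_num
      rw [hcast, hcast2, hcast3] at hre
      simp only [Complex.add_re, Complex.re_ofReal_mul, Complex.zero_re] at hre
      rw [hsAre] at hre
      have hlam2 : 0 < lam ^ 2 := by positivity
      nlinarith [mul_pos hlam2 hdre]
  -- block part
  have hGunit : ∀ lam : ℝ,
      IsUnit ((lam : ℂ) • (1 : Matrix (Fin n ⊕ Fin n) (Fin n ⊕ Fin n) ℂ) - F) := by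
    intro lam
    obtain ⟨u, hu⟩ := hTunit lam
    set Ti : Matrix (Fin n) (Fin n) ℂ := ((u⁻¹ : (Matrix (Fin n) (Fin n) ℂ)ˣ) : Matrix (Fin n) (Fin n) ℂ) with hTi
    have hTmul : T (lam : ℂ) * Ti = 1 := by rw [hTi, ← hu]; exact u.mul_inv
    set P : Matrix (Fin n) (Fin n) ℂ := (lam : ℂ) • 1 + Ac with hP
    set G : Matrix (Fin n ⊕ Fin n) (Fin n ⊕ Fin n) ℂ :=
      (lam : ℂ) • (1 : Matrix (Fin n ⊕ Fin n) (Fin n ⊕ Fin n) ℂ) - F with hG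
    set L : Matrix (Fin n ⊕ Fin n) (Fin n ⊕ Fin n) ℂ := fromBlocks 1 0 P 1 with hL
    set L' : Matrix (Fin n ⊕ Fin n) (Fin n ⊕ Fin n) ℂ := fromBlocks 1 0 (-P) 1 with hL'
    have hLL : L' * L = 1 := by
      rw [hL, hL', fromBlocks_multiply, ← fromBlocks_one]
      congr 1 <;> simp
    have hGblocks : G = fromBlocks P (-1) ((1/2 : ℂ) • V - Ac * Ac) P := by
      rw [hG, hF, ← fromBlocks_one, fromBlocks_smul, sub_eq_add_neg, fromBlocks_neg,
        fromBlocks_add]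
      congr 1 <;> simp [hP] <;> abel
    have hPP : P * P + ((1/2 : ℂ) • V - Ac * Ac) = T (lam : ℂ) := by
      rw [hT, hP]
      have h2 : ((lam : ℂ) • 1 + Ac) * ((lam : ℂ) • 1 + Ac)
          = (lam : ℂ) ^ 2 • 1 + (2 * (lam : ℂ)) • Ac + Ac * Ac := by
        simp only [add_mul, mul_add, Matrix.mul_smul, Matrix.smul_mul, Matrix.one_mul,
          Matrix.mul_one, smul_smul]
        module
      rw [h2]
      abel
    have hLG : L * G = fromBlocks P (-1) (T (lam : ℂ)) (0 : Matrix (Fin n) (Fin n) ℂ) := by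
      rw [hGblocks, hL, fromBlocks_multiply]
      simp only [Matrix.one_mul, Matrix.zero_mul, Matrix.mul_one, Matrix.mul_zero,
        add_zero, zero_add, Matrix.mul_neg, hPP, neg_add_cancel]
    have hMunit : IsUnit (fromBlocks P (-1) (T (lam : ℂ)) (0 : Matrix (Fin n) (Fin n) ℂ)) := by
      have hMN : fromBlocks P (-1) (T (lam : ℂ)) (0 : Matrix (Fin n) (Fin n) ℂ) *
          fromBlocks (0 : Matrix (Fin n) (Fin n) ℂ) Ti (-1 : Matrix (Fin n) (Fin n) ℂ) (P * Ti) = 1 := by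
        rw [fromBlocks_multiply]
        simp only [Matrix.mul_zero, Matrix.zero_mul, Matrix.mul_neg, Matrix.neg_mul,
          Matrix.mul_one, Matrix.one_mul, neg_neg, add_zero, zero_add, add_neg_cancel,
          hTmul, fromBlocks_one]
      exact ⟨⟨_, _, hMN, mul_eq_one_comm.mp hMN⟩, rfl⟩
    have hGL : G = L' * (L * G) := by rw [← Matrix.mul_assoc, hLL, Matrix.one_mul]
    rw [hGL, hLG]
    refine (IsUnit.mul ?_ hMunit)
    exact ⟨⟨L', L, hLL, mul_eq_one_comm.mp hLL⟩, rfl⟩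
  refine ⟨hTunit, fun lam => ?_, ?_⟩
  · have := (Matrix.isUnit_iff_isUnit_det _).mp (hGunit lam)
    exact this.ne_zero
  · have h0 := hGunit 0
    simp only [Complex.ofReal_zero, zero_smul, zero_sub] at h0
    simpa using h0.neg
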